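/- Let A be a C*-algebra and D an abelian C*-subalgebra. Let x₁, …, xₙ ∈ A each normalize D, and suppose xᵢ*xⱼ = 0 whenever i ≠ j. Then z = x₁ + ⋯ + xₙ satisfies z*Dz ⊆ D. -/
import Mathlib

open scoped NNReal

section Aux

variable {A : Type*} [NonUnitalCStarAlgebra A]

/-- The real quasispectrum of `star s * s` is nonnegative. -/
lemma aux_quasi_nonneg (s : A) : ∀ r ∈ quasispectrum ℝ (star s * s), 0 ≤ r := by
  intro r hr
  rw [Unitization.quasispectrum_eq_spectrum_inr' ℝ ℂ] at hr
  have : ((star s * s : A) : Unitization ℂ A)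
      = star (s : Unitization ℂ A) * (s : Unitization ℂ A) := by
    simp
  rw [this] at hr
  exact spectrum_star_mul_self_nonneg r hr

/-- Nonnegative elements (selfadjoint with nonnegative quasispectrum) with equal squares
are equal. -/
lemma aux_sqrt_unique {m n : A} (hm : IsSelfAdjoint m) (hn : IsSelfAdjoint n)
    (hmq : ∀ r ∈ quasispectrum ℝ m, 0 ≤ r) (hnq : ∀ r ∈ quasispectrum ℝ n, 0 ≤ r)
    (h : m * m = n * n) : m = n := by
  have key : ∀ z : A, IsSelfAdjoint z → (∀ r ∈ quasispectrum ℝ z, 0 ≤ r) →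
      cfcₙ Real.sqrt (z * z) = z := by
    intro z hz hzq
    have h1 : z * z = cfcₙ (fun t : ℝ => t * t) z := by
      rw [cfcₙ_mul (fun t : ℝ => t) (fun t : ℝ => t) z, cfcₙ_id' ℝ z]
    rw [h1, ← cfcₙ_comp Real.sqrt (fun t : ℝ => t * t) z]
    have : (quasispectrum ℝ z).EqOn (Real.sqrt ∘ fun t : ℝ => t * t) id := by
      intro r hr
      simp only [Function.comp_apply, id_eq]
      rw [Real.sqrt_mul_self (hzq r hr)]
    rw [cfcₙ_congr this, cfcₙ_id ℝ z]
  rw [← key m hm hmq, h, key n hn hnq]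

end Aux

section Membership

variable {A : Type*} [NonUnitalCStarAlgebra A]

/-- The non-unital continuous functional calculus applied to a selfadjoint element of a closed
commutative star subalgebra stays in the subalgebra. -/
lemma aux_cfcn_mem (D : NonUnitalStarSubalgebra ℂ A) (hD : IsClosed (D : Set A))
    (f : ℝ → ℝ) (hf : Continuous f) (hf0 : f 0 = 0) {u : A} (hu : u ∈ D)
    (hsa : IsSelfAdjoint u) : cfcₙ f u ∈ D := by
  haveI : IsClosed ((D : Set A)) := hD
  set u' : D := ⟨u, hu⟩ with hu'
  have hsa' : IsSelfAdjoint u' := Subtype.ext hsa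
  have hmap := NonUnitalStarAlgHom.map_cfcₙ
    (NonUnitalStarSubalgebraClass.subtype D (R := ℂ)) f u'
    (hf.continuousOn) hf0 (by exact continuous_subtype_val) hsa' hsa
  have : (NonUnitalStarSubalgebraClass.subtype D (R := ℂ)) u' = u := rfl
  rw [this] at hmap
  rw [← hmap]
  exact (cfcₙ f u').2

end Membership

section Cross

variable {A : Type*} [NonUnitalCStarAlgebra A]

/-- Square roots (of fourth powers sort): given `w ∈ D` selfadjoint of the form `star s * s`,
there are `g, h = g * g ∈ D` with `h * h = w`. -/
lemma aux_sqrt_exists (D : NonUnitalStarSubalgebra ℂ A) (hD : IsClosed (D : Set A))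
    {w s : A} (hwD : w ∈ D) (hws : w = star s * s) :
    ∃ g ∈ D, IsSelfAdjoint g ∧ g * g * (g * g) = w := by
  have hwsa : IsSelfAdjoint w := hws ▸ IsSelfAdjoint.star_mul_self s
  set f : ℝ → ℝ := fun t => Real.sqrt (Real.sqrt |t|) with hf_def
  have hf : Continuous f := Real.continuous_sqrt.comp (Real.continuous_sqrt.comp continuous_abs)
  have hf0 : f 0 = 0 := by simp [hf_def]
  refine ⟨cfcₙ f w, aux_cfcn_mem D hD f hf hf0 hwD hwsa, IsSelfAdjoint.cfcₙ, ?_⟩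
  have h1 : cfcₙ f w * cfcₙ f w = cfcₙ (fun t : ℝ => Real.sqrt |t|) w := by
    rw [← cfcₙ_mul f f w (hf.continuousOn) hf0 (hf.continuousOn) hf0]
    refine cfcₙ_congr fun r _ => ?_
    simp only [hf_def]
    rw [Real.mul_self_sqrt (Real.sqrt_nonneg _)]
  have h2 : cfcₙ (fun t : ℝ => Real.sqrt |t|) w * cfcₙ (fun t : ℝ => Real.sqrt |t|) w
      = cfcₙ (fun t : ℝ => |t|) w := by
    rw [← cfcₙ_mul (fun t : ℝ => Real.sqrt |t|) (fun t : ℝ => Real.sqrt |t|) w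
      (Continuous.continuousOn (by fun_prop)) (by simp)
      (Continuous.continuousOn (by fun_prop)) (by simp)]
    refine cfcₙ_congr fun r _ => ?_
    rw [Real.mul_self_sqrt (abs_nonneg _)]
  have h3 : cfcₙ (fun t : ℝ => |t|) w = w := by
    have : (quasispectrum ℝ w).EqOn (fun t : ℝ => |t|) id := by
      intro r hr
      have : 0 ≤ r := aux_quasi_nonneg s r (hws ▸ hr)
      simp [abs_of_nonneg this]
    rw [cfcₙ_congr this, cfcₙ_id ℝ w]
  rw [h1, h2, h3]

variable {D : NonUnitalStarSubalgebra ℂ A}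

/-- Cross-term vanishing for a square `c * c`. -/
lemma aux_cross_sq (hD : IsClosed (D : Set A))
    (hcomm : ∀ x ∈ D, ∀ y ∈ D, x * y = y * x) {x y : A}
    (hx1 : ∀ d ∈ D, star x * d * x ∈ D) (hx2 : ∀ d ∈ D, x * d * star x ∈ D)
    (hy1 : ∀ d ∈ D, star y * d * y ∈ D) (hy2 : ∀ d ∈ D, y * d * star y ∈ D)
    (hxy : star x * y = 0) {c : A} (hc : c ∈ D) (hcsa : IsSelfAdjoint c) :
    star x * (c * c) * y = 0 := by
  set δ : A := c * c with hδ_def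
  have hδD : δ ∈ D := mul_mem hc hc
  have hδsa : IsSelfAdjoint δ := by rw [IsSelfAdjoint, hδ_def, star_mul, hcsa.star_eq]
  have hδ2D : δ * δ ∈ D := mul_mem hδD hδD
  -- w and w'
  set w : A := x * (star x * (δ * δ) * x) * star x with hw_def
  have hwD : w ∈ D := hx2 _ (hx1 _ hδ2D)
  have hws : w = star (δ * (x * star x)) * (δ * (x * star x)) := by
    rw [hw_def]
    simp only [star_mul, star_star, hδsa.star_eq, mul_assoc]
  set w' : A := y * (star y * (δ * δ) * y) * star y with hw'_def
  have hw'D : w' ∈ D := hy2 _ (hy1 _ hδ2D)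
  have hw's : w' = star (δ * (y * star y)) * (δ * (y * star y)) := by
    rw [hw'_def]
    simp only [star_mul, star_star, hδsa.star_eq, mul_assoc]
  obtain ⟨g, hgD, hgsa, hgw⟩ := aux_sqrt_exists D hD hwD hws
  obtain ⟨g', hg'D, hg'sa, hg'w⟩ := aux_sqrt_exists D hD hw'D hw's
  set h : A := g * g with hh_def
  set k : A := g' * g' with hk_def
  have hhD : h ∈ D := mul_mem hgD hgD
  have hkD : k ∈ D := mul_mem hg'D hg'D
  have hhsa : IsSelfAdjoint h := by rw [IsSelfAdjoint, hh_def, star_mul, hgsa.star_eq]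
  have hksa : IsSelfAdjoint k := by rw [IsSelfAdjoint, hk_def, star_mul, hg'sa.star_eq]
  -- commutation facts
  have hδh : δ * h = h * δ := hcomm δ hδD h hhD
  have hδk : δ * k = k * δ := hcomm δ hδD k hkD
  have hhk : h * k = k * h := hcomm h hhD k hkD
  -- generic swap computation
  have swap : ∀ g₀ : A, c * g₀ = g₀ * c → g₀ * g₀ * (c * c) = c * g₀ * (g₀ * c) := by
    intro g₀ hcg
    calc g₀ * g₀ * (c * c) = g₀ * (g₀ * c) * c := by simp only [mul_assoc]
      _ = g₀ * (c * g₀) * c := by rw [hcg]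
      _ = (g₀ * c) * (g₀ * c) := by simp only [mul_assoc]
      _ = (c * g₀) * (g₀ * c) := by rw [hcg]
  have hhδ_rep : h * δ = star (g * c) * (g * c) := by
    simp only [star_mul, hgsa.star_eq, hcsa.star_eq, hh_def, hδ_def]
    exact swap g (hcomm c hc g hgD)
  have hkδ_rep : k * δ = star (g' * c) * (g' * c) := by
    simp only [star_mul, hg'sa.star_eq, hcsa.star_eq, hk_def, hδ_def]
    exact swap g' (hcomm c hc g' hg'D)
  have hax : δ * (x * star x) * δ = star (star x * δ) * (star x * δ) := by
    simp only [star_mul, star_star, hδsa.star_eq, mul_assoc]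
  have hay : δ * (y * star y) * δ = star (star y * δ) * (star y * δ) := by
    simp only [star_mul, star_star, hδsa.star_eq, mul_assoc]
  -- m = δ a δ equals h δ
  have hm_eq : δ * (x * star x) * δ = h * δ := by
    refine aux_sqrt_unique ?_ ?_ ?_ ?_ ?_
    · rw [hax]; exact IsSelfAdjoint.star_mul_self _
    · rw [hhδ_rep]; exact IsSelfAdjoint.star_mul_self _
    · intro r hr; exact aux_quasi_nonneg _ r (hax ▸ hr)
    · intro r hr; exact aux_quasi_nonneg _ r (hhδ_rep ▸ hr)
    · have e1 : δ * (x * star x) * δ * (δ * (x * star x) * δ) = δ * w * δ := by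
        simp only [hw_def, mul_assoc]
      have e2 : δ * w * δ = h * δ * (h * δ) := by
        rw [← hgw]
        calc δ * (h * h) * δ = δ * h * (h * δ) := by simp only [mul_assoc]
          _ = h * δ * (h * δ) := by rw [hδh]
      rw [e1, e2]
  -- m' = δ b δ equals k δ
  have hm'_eq : δ * (y * star y) * δ = k * δ := by
    refine aux_sqrt_unique ?_ ?_ ?_ ?_ ?_
    · rw [hay]; exact IsSelfAdjoint.star_mul_self _
    · rw [hkδ_rep]; exact IsSelfAdjoint.star_mul_self _
    · intro r hr; exact aux_quasi_nonneg _ r (hay ▸ hr)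
    · intro r hr; exact aux_quasi_nonneg _ r (hkδ_rep ▸ hr)
    · have e1 : δ * (y * star y) * δ * (δ * (y * star y) * δ) = δ * w' * δ := by
        simp only [hw'_def, mul_assoc]
      have e2 : δ * w' * δ = k * δ * (k * δ) := by
        rw [← hg'w]
        calc δ * (k * k) * δ = δ * k * (k * δ) := by simp only [mul_assoc]
          _ = k * δ * (k * δ) := by rw [hδk]
      rw [e1, e2]
  -- h * k = 0
  have hww' : w * w' = 0 := by
    have e : w * w' = x * (star x * (δ * δ) * x) * ((star x * y)
        * (star y * (δ * δ) * y) * star y) := by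
      simp only [hw_def, hw'_def, mul_assoc]
    rw [e, hxy]
    simp
  have hhk0 : h * k = 0 := by
    have hsq : (h * k) * (h * k) = 0 := by
      have e : (h * k) * (h * k) = h * h * (k * k) := by
        calc (h * k) * (h * k) = h * (k * h) * k := by simp only [mul_assoc]
          _ = h * (h * k) * k := by rw [hhk]
          _ = h * h * (k * k) := by simp only [mul_assoc]
      rw [e, hgw, hg'w, hww']
    have hsa : IsSelfAdjoint (h * k) := by
      rw [IsSelfAdjoint, star_mul, hhsa.star_eq, hksa.star_eq, ← hhk]
    have : ‖h * k‖ * ‖h * k‖ = 0 := by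
      rw [← CStarRing.norm_star_mul_self, hsa.star_eq, hsq, norm_zero]
    rw [← norm_eq_zero]
    exact mul_self_eq_zero.mp this
  -- final computation
  have hS : star (star x * δ * y) * (star x * δ * y)
      = star y * (h * δ) * y := by
    rw [← hm_eq]
    simp only [star_mul, star_star, hδsa.star_eq, mul_assoc]
  have hSS : (star (star x * δ * y) * (star x * δ * y))
      * (star (star x * δ * y) * (star x * δ * y)) = 0 := by
    rw [hS]
    have e1 : star y * (h * δ) * y * (star y * (h * δ) * y)
        = star y * h * (δ * (y * star y) * δ) * (h * y) := by
      calc star y * (h * δ) * y * (star y * (h * δ) * y)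
          = star y * (h * (δ * (y * (star y * ((h * δ) * y))))) := by simp only [mul_assoc]
        _ = star y * (h * (δ * (y * (star y * ((δ * h) * y))))) := by rw [hδh]
        _ = star y * h * (δ * (y * star y) * δ) * (h * y) := by simp only [mul_assoc]
    rw [e1, hm'_eq]
    calc star y * h * (k * δ) * (h * y)
        = star y * ((h * k) * (δ * (h * y))) := by simp only [mul_assoc]
      _ = 0 := by rw [hhk0]; simp
  -- conclude
  have hS0 : star (star x * δ * y) * (star x * δ * y) = 0 := by
    have hsa : IsSelfAdjoint (star (star x * δ * y) * (star x * δ * y)) :=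
      IsSelfAdjoint.star_mul_self _
    have : ‖star (star x * δ * y) * (star x * δ * y)‖
        * ‖star (star x * δ * y) * (star x * δ * y)‖ = 0 := by
      rw [← CStarRing.norm_star_mul_self, hsa.star_eq, hSS, norm_zero]
    rw [← norm_eq_zero]
    exact mul_self_eq_zero.mp this
  exact (CStarRing.star_mul_self_eq_zero_iff _).mp hS0

/-- Cross-term vanishing for selfadjoint middle elements. -/
lemma aux_cross_sa (hD : IsClosed (D : Set A))
    (hcomm : ∀ x ∈ D, ∀ y ∈ D, x * y = y * x) {x y : A}
    (hx1 : ∀ d ∈ D, star x * d * x ∈ D) (hx2 : ∀ d ∈ D, x * d * star x ∈ D)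
    (hy1 : ∀ d ∈ D, star y * d * y ∈ D) (hy2 : ∀ d ∈ D, y * d * star y ∈ D)
    (hxy : star x * y = 0) {u : A} (hu : u ∈ D) (husa : IsSelfAdjoint u) :
    star x * u * y = 0 := by
  set fp : ℝ → ℝ := fun t => Real.sqrt (max t 0) with hfp_def
  set fm : ℝ → ℝ := fun t => Real.sqrt (max (-t) 0) with hfm_def
  have hfpc : Continuous fp := Real.continuous_sqrt.comp (continuous_id.max continuous_const)
  have hfmc : Continuous fm := Real.continuous_sqrt.comp (continuous_neg.max continuous_const)
  have hfp0 : fp 0 = 0 := by simp [hfp_def]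
  have hfm0 : fm 0 = 0 := by simp [hfm_def]
  set q1 : A := cfcₙ fp u with hq1_def
  set q2 : A := cfcₙ fm u with hq2_def
  have hq1D : q1 ∈ D := aux_cfcn_mem D hD fp hfpc hfp0 hu husa
  have hq2D : q2 ∈ D := aux_cfcn_mem D hD fm hfmc hfm0 hu husa
  have hq1sa : IsSelfAdjoint q1 := IsSelfAdjoint.cfcₙ
  have hq2sa : IsSelfAdjoint q2 := IsSelfAdjoint.cfcₙ
  have hdecomp : q1 * q1 - q2 * q2 = u := by
    have e1 : q1 * q1 = cfcₙ (fun t : ℝ => max t 0) u := by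
      rw [hq1_def, ← cfcₙ_mul fp fp u (hfpc.continuousOn) hfp0 (hfpc.continuousOn) hfp0]
      refine cfcₙ_congr fun r _ => ?_
      simp only [hfp_def]
      rw [Real.mul_self_sqrt (le_max_right _ _)]
    have e2 : q2 * q2 = cfcₙ (fun t : ℝ => max (-t) 0) u := by
      rw [hq2_def, ← cfcₙ_mul fm fm u (hfmc.continuousOn) hfm0 (hfmc.continuousOn) hfm0]
      refine cfcₙ_congr fun r _ => ?_
      simp only [hfm_def]
      rw [Real.mul_self_sqrt (le_max_right _ _)]
    rw [e1, e2, ← cfcₙ_sub (fun t : ℝ => max t 0) (fun t : ℝ => max (-t) 0) u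
      (Continuous.continuousOn (by fun_prop)) (by simp)
      (Continuous.continuousOn (by fun_prop)) (by simp)]
    have : (fun t : ℝ => max t 0 - max (-t) 0) = fun t : ℝ => t := by
      funext t
      rcases le_total t 0 with ht | ht
      · rw [max_eq_right ht, max_eq_left (by linarith)]
        simp
      · rw [max_eq_left ht, max_eq_right (by linarith)]
        simp
    rw [this, cfcₙ_id' ℝ u]
  have hz1 : star x * (q1 * q1) * y = 0 :=
    aux_cross_sq hD hcomm hx1 hx2 hy1 hy2 hxy hq1D hq1sa
  have hz2 : star x * (q2 * q2) * y = 0 :=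
    aux_cross_sq hD hcomm hx1 hx2 hy1 hy2 hxy hq2D hq2sa
  calc star x * u * y = star x * (q1 * q1 - q2 * q2) * y := by rw [hdecomp]
    _ = star x * (q1 * q1) * y - star x * (q2 * q2) * y := by
        rw [mul_sub, sub_mul]
    _ = 0 := by rw [hz1, hz2, sub_zero]

/-- Cross-term vanishing in general. -/
lemma aux_cross (hD : IsClosed (D : Set A))
    (hcomm : ∀ x ∈ D, ∀ y ∈ D, x * y = y * x) {x y : A}
    (hx1 : ∀ d ∈ D, star x * d * x ∈ D) (hx2 : ∀ d ∈ D, x * d * star x ∈ D)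
    (hy1 : ∀ d ∈ D, star y * d * y ∈ D) (hy2 : ∀ d ∈ D, y * d * star y ∈ D)
    (hxy : star x * y = 0) {d : A} (hd : d ∈ D) :
    star x * d * y = 0 := by
  set re : A := ((2⁻¹ : ℂ)) • (d + star d) with hre_def
  set im : A := ((-(Complex.I) / 2 : ℂ)) • (d - star d) with him_def
  have hreD : re ∈ D := SMulMemClass.smul_mem _ (add_mem hd (star_mem hd))
  have himD : im ∈ D := SMulMemClass.smul_mem _ (sub_mem hd (star_mem hd))
  have hresa : IsSelfAdjoint re := by
    rw [hre_def, IsSelfAdjoint, star_smul, star_add, star_star]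
    rw [show star (2⁻¹ : ℂ) = (2⁻¹ : ℂ) by simp, add_comm]
  have himsa : IsSelfAdjoint im := by
    rw [him_def, IsSelfAdjoint, star_smul, star_sub, star_star]
    rw [show star (-Complex.I / 2 : ℂ) = (Complex.I / 2 : ℂ) by simp [Complex.ext_iff]]
    rw [show (star d - d) = -(d - star d) from (neg_sub _ _).symm]
    rw [smul_neg, ← neg_smul]
    rw [show -(Complex.I / 2) = (-Complex.I / 2 : ℂ) from (neg_div _ _).symm]
  have hsum : re + Complex.I • im = d := by
    rw [hre_def, him_def, smul_smul]
    rw [show Complex.I * (-Complex.I / 2) = (2⁻¹ : ℂ) by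
      calc Complex.I * (-Complex.I / 2) = -(Complex.I * Complex.I) / 2 := by ring
        _ = (2⁻¹ : ℂ) := by rw [Complex.I_mul_I]; norm_num]
    rw [← smul_add]
    rw [show (d + star d) + (d - star d) = d + d by abel]
    rw [← two_smul ℂ d, smul_smul]
    norm_num
  have h1 : star x * re * y = 0 :=
    aux_cross_sa hD hcomm hx1 hx2 hy1 hy2 hxy hreD hresa
  have h2 : star x * im * y = 0 :=
    aux_cross_sa hD hcomm hx1 hx2 hy1 hy2 hxy himD himsa
  calc star x * d * y = star x * (re + Complex.I • im) * y := by rw [hsum]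
    _ = star x * re * y + Complex.I • (star x * im * y) := by
        rw [mul_add, add_mul]
        congr 1
        rw [mul_smul_comm, smul_mul_assoc]
    _ = 0 := by rw [h1, h2, smul_zero, add_zero]

end Cross

/-- if `D` is an abelian C*-subalgebra, `x₁,…,xₙ` normalize `D` and
`xᵢ* xⱼ = 0` for `i ≠ j`, then `z = ∑ xᵢ` satisfies `z* D z ⊆ D`. -/
theorem sum_rNormalizer {A : Type*} [NonUnitalCStarAlgebra A]
    (D : NonUnitalStarSubalgebra ℂ A) (hD : IsClosed (D : Set A))
    (hcomm : ∀ x ∈ D, ∀ y ∈ D, x * y = y * x)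
    (n : ℕ) (x : Fin n → A)
    (hx : ∀ i, ∀ d ∈ D, star (x i) * d * x i ∈ D ∧ x i * d * star (x i) ∈ D)
    (horth : ∀ i j, i ≠ j → star (x i) * x j = 0) :
    ∀ d ∈ D, star (∑ i, x i) * d * (∑ i, x i) ∈ D := by
  intro d hd
  have expand : star (∑ i, x i) * d * (∑ i, x i)
      = ∑ i, ∑ j, star (x i) * d * x j := by
    rw [star_sum, Finset.sum_mul, Finset.sum_mul]
    exact Finset.sum_congr rfl fun i _ => by rw [Finset.mul_sum]
  rw [expand]
  refine sum_mem fun i _ => sum_mem fun j _ => ?_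
  by_cases hij : i = j
  · subst hij
    exact (hx i d hd).1
  · rw [aux_cross hD hcomm (fun e he => (hx i e he).1) (fun e he => (hx i e he).2)
      (fun e he => (hx j e he).1) (fun e he => (hx j e he).2) (horth i j hij) hd]
    exact zero_mem D
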